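/- arXiv:2305.16475 — 3 statements merged into one kernel-verified Lean document; each statement's English description precedes it below -/
import Mathlib

section
/- There exists a universal constant c > 0 with the following property. For any B, L ≥ 1 and 0 < ε ≤ 1 such that L²B²/(128ε²) ≥ 20, there exist dimensions d and n (one may take d = ⌊L²B²/(128ε²)⌋ and n exponentially large in d) and an L-Lipschitz function f: ℝⁿ → ℝ (with respect to the Euclidean norm) such that the function class F = {x ↦ f(Wx) : W ∈ ℝ^{n×d}, ‖W‖_F ≤ B} shatters at least exp(c·L²B²/ε²) points from the Euclidean unit ball {x ∈ ℝ^d : ‖x‖ ≤ 1} with margin ε. -/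
noncomputable section

open scoped BigOperators

/-- Euclidean norm of a vector in `ℝ^n`. -/
def euclNorm {n : ℕ} (v : Fin n → ℝ) : ℝ := Real.sqrt (∑ i, (v i) ^ 2)

/-- Frobenius norm of a matrix. -/
def frobNorm {n d : ℕ} (M : Matrix (Fin n) (Fin d) ℝ) : ℝ :=
  Real.sqrt (∑ i, ∑ j, (M i j) ^ 2)

/-- A class `F` of real-valued functions shatters the points `x 0, …, x (m-1)` with margin `ε`. -/
def shatters {X : Type*} {m : ℕ} (F : Set (X → ℝ)) (x : Fin m → X) (ε : ℝ) : Prop :=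
  ∃ s : ℝ, ∀ y : Fin m → Bool, ∃ f ∈ F, ∀ i : Fin m,
    (y i = false → f (x i) ≤ s - ε) ∧ (y i = true → s + ε ≤ f (x i))

open Finset in
lemma exists_good_code (k d : ℕ) (hk : 1 ≤ k) (hd : d = 8*k) :
    ∃ C : Finset (Fin d → Bool), (∀ a ∈ C, ∀ b ∈ C, a ≠ b → k ≤ hammingDist a b) ∧
      2^d * 7^(7*k) ≤ C.card * 8^d := by
  classical
  -- collection of codes
  set P : Finset (Fin d → Bool) → Prop :=
    fun s => ∀ a ∈ s, ∀ b ∈ s, a ≠ b → k ≤ hammingDist a b with hP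
  have hS : ((Finset.univ : Finset (Fin d → Bool)).powerset.filter P).Nonempty := by
    refine ⟨∅, ?_⟩
    simp [hP]
  obtain ⟨C, hCmem, hCmax⟩ := Finset.exists_max_image _ Finset.card hS
  have hCcode : P C := (Finset.mem_filter.mp hCmem).2
  refine ⟨C, hCcode, ?_⟩
  -- covering property
  have hcover : ∀ v : Fin d → Bool, ∃ a ∈ C, hammingDist v a < k := by
    intro v
    by_contra h
    push_neg at h
    have hvC : v ∉ C := by
      intro hv
      have := h v hv
      simp [hammingDist_self] at this
      omega
    have hins : P (insert v C) := by
      intro a ha b hb hab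
      rcases Finset.mem_insert.mp ha with ha' | ha' <;>
        rcases Finset.mem_insert.mp hb with hb' | hb'
      · exact absurd (ha'.trans hb'.symm) hab
      · subst ha'; have := h b hb'; omega
      · subst hb'; have := h a ha'; rw [hammingDist_comm]; omega
      · exact hCcode a ha' b hb' hab
    have : (insert v C).card ≤ C.card :=
      hCmax _ (Finset.mem_filter.mpr ⟨Finset.mem_powerset.mpr (Finset.subset_univ _), hins⟩)
    rw [Finset.card_insert_of_notMem hvC] at this
    omega
  -- ball cardinality bound
  have hball : ∀ a : Fin d → Bool,
      (Finset.univ.filter (fun v => hammingDist v a < k)).card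
        ≤ ∑ j ∈ Finset.range k, d.choose j := by
    intro a
    have : (Finset.univ.filter (fun v => hammingDist v a < k)).card
        ≤ ((Finset.range k).biUnion (fun j => Finset.powersetCard j (Finset.univ : Finset (Fin d)))).card := by
      apply Finset.card_le_card_of_injOn (fun v => Finset.univ.filter (fun i => v i ≠ a i))
      · intro v hv
        simp only [Finset.mem_coe, Finset.mem_filter] at hv
        apply Finset.mem_biUnion.mpr
        refine ⟨(Finset.univ.filter (fun i => v i ≠ a i)).card, ?_, ?_⟩
        · exact Finset.mem_range.mpr (by simpa [hammingDist] using hv.2)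
        · simp [Finset.mem_powersetCard]
      · intro v hv w hw hvw
        have hvw' : Finset.univ.filter (fun i => v i ≠ a i)
            = Finset.univ.filter (fun i => w i ≠ a i) := hvw
        funext i
        have h1 : (v i ≠ a i) ↔ (w i ≠ a i) := by
          constructor
          · intro h; have : i ∈ Finset.univ.filter (fun i => w i ≠ a i) := by
              rw [← hvw']; simp [h]
            simpa using this
          · intro h; have : i ∈ Finset.univ.filter (fun i => v i ≠ a i) := by
              rw [hvw']; simp [h]
            simpa using this
        cases hvi : v i <;> cases hwi : w i <;> cases hai : a i <;> simp_all
    refine this.trans ?_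
    refine (Finset.card_biUnion_le).trans ?_
    apply Finset.sum_le_sum
    intro j hj
    simp [Finset.card_powersetCard]
  -- covering count
  have hcount : 2^d ≤ C.card * (∑ j ∈ Finset.range k, d.choose j) := by
    have huniv : (Finset.univ : Finset (Fin d → Bool))
        ⊆ C.biUnion (fun a => Finset.univ.filter (fun v => hammingDist v a < k)) := by
      intro v _
      obtain ⟨a, ha, hd'⟩ := hcover v
      exact Finset.mem_biUnion.mpr ⟨a, ha, by simp [hd']⟩
    have h1 : (2:ℕ)^d = (Finset.univ : Finset (Fin d → Bool)).card := by
      simp [Finset.card_univ]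
    rw [h1]
    refine (Finset.card_le_card huniv).trans ?_
    refine (Finset.card_biUnion_le).trans ?_
    calc ∑ a ∈ C, (Finset.univ.filter (fun v => hammingDist v a < k)).card
        ≤ ∑ _a ∈ C, (∑ j ∈ Finset.range k, d.choose j) := Finset.sum_le_sum (fun a _ => hball a)
      _ = C.card * (∑ j ∈ Finset.range k, d.choose j) := by
          rw [Finset.sum_const, smul_eq_mul]
  -- binomial bound
  have hbin : (∑ j ∈ Finset.range k, d.choose j) * 7^(7*k) ≤ 8^d := by
    have h8 : (8:ℕ)^d = ∑ m ∈ Finset.range (d+1), 1^m * 7^(d-m) * d.choose m := by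
      have := add_pow 1 7 d (R := ℕ)
      norm_num at this ⊢
      rw [← this]
    rw [h8, Finset.sum_mul]
    calc ∑ j ∈ Finset.range k, d.choose j * 7^(7*k)
        ≤ ∑ j ∈ Finset.range k, 1^j * 7^(d-j) * d.choose j := by
          apply Finset.sum_le_sum
          intro j hj
          simp only [Finset.mem_range] at hj
          have h7 : (7:ℕ)^(7*k) ≤ 7^(d-j) := by
            apply Nat.pow_le_pow_right (by norm_num); omega
          calc d.choose j * 7^(7*k) ≤ d.choose j * 7^(d-j) := Nat.mul_le_mul_left _ h7
            _ = 1^j * 7^(d-j) * d.choose j := by ring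
      _ ≤ ∑ m ∈ Finset.range (d+1), 1^m * 7^(d-m) * d.choose m := by
          apply Finset.sum_le_sum_of_subset
          intro j hj
          simp only [Finset.mem_range] at hj ⊢
          omega
  calc 2^d * 7^(7*k) ≤ (C.card * (∑ j ∈ Finset.range k, d.choose j)) * 7^(7*k) :=
        Nat.mul_le_mul_right _ hcount
    _ = C.card * ((∑ j ∈ Finset.range k, d.choose j) * 7^(7*k)) := by ring
    _ ≤ C.card * 8^d := Nat.mul_le_mul_left _ hbin

-- bridge lemma
lemma euclNorm_eq_norm {n : ℕ} (v : Fin n → ℝ) :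
    ‖(WithLp.equiv 2 (Fin n → ℝ)).symm v‖ = euclNorm v := by
  rw [EuclideanSpace.norm_eq, euclNorm]
  congr 1
  apply Finset.sum_congr rfl
  intro i _
  rw [Real.norm_eq_abs, sq_abs]; rfl

lemma equiv_symm_sub' {n : ℕ} (u v : Fin n → ℝ) :
    (WithLp.equiv 2 (Fin n → ℝ)).symm u - (WithLp.equiv 2 (Fin n → ℝ)).symm v
      = (WithLp.equiv 2 (Fin n → ℝ)).symm (u - v) := rfl

section Wlemmas
variable {m d n : ℕ} (ι : ((Fin m → Bool) × Fin d) ≃ Fin n) (r : ℝ)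

def Wmat (y : Fin m → Bool) : Matrix (Fin n) (Fin d) ℝ :=
  fun a j => if a = ι (y, j) then r else 0

lemma Wmat_mulVec (y y' : Fin m → Bool) (v : Fin d → ℝ) (j : Fin d) :
    (Wmat ι r y).mulVec v (ι (y', j)) = if y' = y then r * v j else 0 := by
  unfold Wmat
  simp only [Matrix.mulVec, dotProduct]
  have key : ∀ j' : Fin d, (if ι (y', j) = ι (y, j') then r else 0) * v j'
      = if y' = y then (if j = j' then r * v j' else 0) else 0 := by
    intro j'
    have hcond : (ι (y', j) = ι (y, j')) ↔ (y' = y ∧ j = j') := by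
      rw [EmbeddingLike.apply_eq_iff_eq, Prod.mk.injEq]
    rcases eq_or_ne y' y with rfl | hyy
    · rcases eq_or_ne j j' with rfl | hjj
      · rw [if_pos (hcond.mpr ⟨rfl, rfl⟩), if_pos rfl, if_pos rfl]
      · rw [if_neg (fun h => hjj (hcond.mp h).2), if_pos rfl, if_neg hjj, zero_mul]
    · rw [if_neg (fun h => hyy (hcond.mp h).1), if_neg hyy, zero_mul]
  rw [Finset.sum_congr rfl (fun j' _ => key j')]
  rcases eq_or_ne y' y with rfl | hyy
  · simp [Finset.sum_ite_eq]
  · simp [hyy]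

lemma Wmat_frob_sq (y : Fin m → Bool) :
    ∑ a, ∑ j, (Wmat ι r y a j)^2 = d * r^2 := by
  rw [Finset.sum_comm]
  have : ∀ j : Fin d, ∑ a, (Wmat ι r y a j)^2 = r^2 := by
    intro j
    unfold Wmat
    have : ∀ a : Fin n, (if a = ι (y, j) then r else 0)^2
        = if a = ι (y, j) then r^2 else 0 := by
      intro a; split <;> simp
    rw [Finset.sum_congr rfl (fun a _ => this a), Finset.sum_ite_eq']
    simp
  rw [Finset.sum_congr rfl (fun j _ => this j)]
  simp [mul_comm]

lemma Wmat_dist_sq (y y' : Fin m → Bool) (u u' : Fin d → ℝ) :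
    ∑ a, ((Wmat ι r y).mulVec u a - (Wmat ι r y').mulVec u' a)^2
      = if y = y' then ∑ j, (r * u j - r * u' j)^2
        else (∑ j, (r * u j)^2) + ∑ j, (r * u' j)^2 := by
  rw [← Equiv.sum_comp ι (fun a => ((Wmat ι r y).mulVec u a - (Wmat ι r y').mulVec u' a)^2),
    Fintype.sum_prod_type]
  simp only [Wmat_mulVec]
  rcases eq_or_ne y y' with rfl | hyy
  · have : ∀ y'' : Fin m → Bool,
        ∑ j, ((if y'' = y then r * u j else 0) - (if y'' = y then r * u' j else 0))^2
        = if y'' = y then ∑ j, (r * u j - r * u' j)^2 else 0 := by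
      intro y''
      rcases eq_or_ne y'' y with rfl | h
      · simp
      · simp [h]
    rw [Finset.sum_congr rfl (fun y'' _ => this y''), Finset.sum_ite_eq']
    simp
  · have : ∀ y'' : Fin m → Bool,
        ∑ j, ((if y'' = y then r * u j else 0) - (if y'' = y' then r * u' j else 0))^2
        = (if y'' = y then ∑ j, (r * u j)^2 else 0)
          + (if y'' = y' then ∑ j, (r * u' j)^2 else 0) := by
      intro y''
      rcases eq_or_ne y'' y with rfl | h1
      · simp [Ne.symm hyy, hyy]
      · rcases eq_or_ne y'' y' with rfl | h2
        · simp [h1]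
        · simp [h1, h2]
    rw [Finset.sum_congr rfl (fun y'' _ => this y''), Finset.sum_add_distrib,
      Finset.sum_ite_eq', Finset.sum_ite_eq']
    simp [hyy]
end Wlemmas

set_option maxHeartbeats 2000000 in
/-- Theorem 1 (lower bound, zero initialization): for suitable `B, L, ε` there exist
dimensions `d, n` and an `L`-Lipschitz `f : ℝ^n → ℝ` such that
`{x ↦ f(Wx) : ‖W‖_F ≤ B}` shatters at least `exp(c L² B² / ε²)` points of the
Euclidean unit ball of `ℝ^d` with margin `ε`. -/
theorem statement0 :
    ∃ c : ℝ, 0 < c ∧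
      ∀ B L ε : ℝ, 1 ≤ B → 1 ≤ L → 0 < ε → ε ≤ 1 →
        20 ≤ L ^ 2 * B ^ 2 / (128 * ε ^ 2) →
        ∃ (d n mpts : ℕ) (f : (Fin n → ℝ) → ℝ),
          (∀ u v : Fin n → ℝ, |f u - f v| ≤ L * euclNorm (u - v)) ∧
          Real.exp (c * L ^ 2 * B ^ 2 / ε ^ 2) ≤ (mpts : ℝ) ∧
          ∃ x : Fin mpts → (Fin d → ℝ),
            (∀ i, euclNorm (x i) ≤ 1) ∧
            shatters {g | ∃ W : Matrix (Fin n) (Fin d) ℝ,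
                frobNorm W ≤ B ∧ g = fun v => f (W.mulVec v)} x ε := by
  classical
  refine ⟨1/1000, by norm_num, ?_⟩
  intro B L ε hB hL hε hε1 hTbig
  have hε2 : (0:ℝ) < ε^2 := by positivity
  have h2ε : (0:ℝ) < 2*ε := by linarith
  have hL0 : (0:ℝ) < L := by linarith
  have hB0 : (0:ℝ) < B := by linarith
  set T : ℝ := L^2 * B^2 / ε^2 with hTdef
  have hT0 : 0 < T := by positivity
  have hT2560 : 2560 ≤ T := by
    have h : L ^ 2 * B ^ 2 / (128 * ε ^ 2) = T / 128 := by
      rw [hTdef]; field_simp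
    rw [h] at hTbig; linarith
  set k : ℕ := ⌊T/1024⌋₊ with hkdef
  have hk2 : 2 ≤ k := by
    apply Nat.le_floor
    push_cast
    linarith
  have hkT : (k:ℝ) ≤ T/1024 := Nat.floor_le (by positivity)
  have hkT' : T/1024 < (k:ℝ) + 1 := Nat.lt_floor_add_one _
  set d : ℕ := 8*k with hddef
  have hd0 : 0 < d := by omega
  have hdR : (0:ℝ) < (d:ℕ) := by exact_mod_cast hd0
  have hdT : (d:ℝ) ≤ T/128 := by
    rw [hddef]; push_cast; linarith
  have hdd : (d:ℝ) = 8*(k:ℝ) := by rw [hddef]; push_cast; ring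
  obtain ⟨C, hCcode, hCcard⟩ := exists_good_code k d (by omega) rfl
  set mpts := C.card with hmdef
  -- cardinality bound
  have hexp : Real.exp ((1:ℝ)/1000 * L ^ 2 * B ^ 2 / ε ^ 2) ≤ (mpts : ℝ) := by
    have h1 : (1:ℝ)/1000 * L ^ 2 * B ^ 2 / ε ^ 2 = T/1000 := by
      rw [hTdef]; ring
    rw [h1]
    have h2 : T/1000 ≤ 2*(k:ℝ) := by
      have : T/512 - 2 ≤ 2*(k:ℝ) := by linarith
      have h3 : T/1000 ≤ T/512 - 2 := by linarith
      linarith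
    have h4 : Real.exp (T/1000) ≤ Real.exp (2*(k:ℝ)) := Real.exp_le_exp.mpr h2
    refine h4.trans ?_
    have h5 : Real.exp (2*(k:ℝ)) = (Real.exp 2)^k := by
      rw [mul_comm, Real.exp_nat_mul]
    have h6 : Real.exp 2 ≤ (823543:ℝ)/65536 := by
      have := Real.exp_one_lt_d9
      have h7 : Real.exp 2 = (Real.exp 1)^2 := by
        rw [← Real.exp_nat_mul]; norm_num
      rw [h7]
      nlinarith [Real.exp_pos 1]
    have h8 : ((823543:ℝ)/65536)^k ≤ (mpts:ℝ) := by
      have hcast : (2:ℝ)^d * 7^(7*k) ≤ (mpts:ℝ) * 8^d := by exact_mod_cast hCcard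
      rw [hddef] at hcast
      have hpow : ((823543:ℝ)/65536)^k * 8^(8*k) = 2^(8*k) * 7^(7*k) := by
        rw [pow_mul, pow_mul, pow_mul, ← mul_pow, ← mul_pow]
        norm_num
      have h8pos : (0:ℝ) < 8^(8*k) := by positivity
      rw [← mul_le_mul_iff_of_pos_right h8pos, hpow]
      linarith
    calc Real.exp (2*(k:ℝ)) = (Real.exp 2)^k := h5
      _ ≤ ((823543:ℝ)/65536)^k := by
          apply pow_le_pow_left₀ (Real.exp_pos 2).le h6
      _ ≤ (mpts:ℝ) := h8
  clear_value T k
  -- geometry setup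
  set n : ℕ := Fintype.card ((Fin mpts → Bool) × Fin d) with hndef
  set ι : ((Fin mpts → Bool) × Fin d) ≃ Fin n := Fintype.equivFin _ with hιdef
  clear hιdef
  clear_value ι n
  have hsd : (0:ℝ) < Real.sqrt d := Real.sqrt_pos.mpr hdR
  set r : ℝ := B / Real.sqrt d with hrdef
  have hr0 : 0 < r := by positivity
  have hr2 : r^2 = B^2 / d := by
    rw [hrdef, div_pow, Real.sq_sqrt hdR.le]
  set cw : Fin mpts → (Fin d → Bool) := fun i => (C.equivFin.symm i : C).1 with hcwdef
  have hcwinj : Function.Injective cw := by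
    intro i i' h
    have := Subtype.ext h (p := (· ∈ C))
    exact C.equivFin.symm.injective this
  set pt : Fin mpts → (Fin d → ℝ) :=
    fun i j => if cw i j then 1/Real.sqrt d else -(1/Real.sqrt d) with hptdef
  have hpt_sq_term : ∀ i j, (pt i j)^2 = 1/d := by
    intro i j
    have h1 : ((1:ℝ)/Real.sqrt d)^2 = 1/d := by
      rw [div_pow, one_pow, Real.sq_sqrt hdR.le]
    show (if cw i j = true then 1/Real.sqrt d else -(1/Real.sqrt d))^2 = 1/(d:ℝ)
    split
    · exact h1
    · rw [neg_pow, h1]; norm_num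
  have hpt_sq : ∀ i, ∑ j, (pt i j)^2 = 1 := by
    intro i
    rw [Finset.sum_congr rfl (fun j _ => hpt_sq_term i j)]
    rw [Finset.sum_const, Finset.card_univ, Fintype.card_fin, nsmul_eq_mul,
      mul_one_div, div_self hdR.ne']
  have hpt_norm : ∀ i, euclNorm (pt i) ≤ 1 := by
    intro i
    rw [euclNorm, hpt_sq i, Real.sqrt_one]
  -- separation
  have hpt_sep : ∀ i i', i ≠ i' → (1:ℝ)/2 ≤ ∑ j, (pt i j - pt i' j)^2 := by
    intro i i' hii
    have hcd : k ≤ hammingDist (cw i) (cw i') :=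
      hCcode _ (by rw [hcwdef]; exact (C.equivFin.symm i).2) _
        (by rw [hcwdef]; exact (C.equivFin.symm i').2) (fun h => hii (hcwinj h))
    have hterm : ∀ j ∈ Finset.univ.filter (fun j => cw i j ≠ cw i' j),
        (pt i j - pt i' j)^2 = 4/d := by
      intro j hj
      simp only [Finset.mem_filter] at hj
      have h4 : ((2:ℝ)/Real.sqrt d)^2 = 4/d := by
        rw [div_pow, Real.sq_sqrt hdR.le]; norm_num
      rw [hptdef]
      rcases Bool.eq_false_or_eq_true (cw i j) with h1 | h1 <;>
        rcases Bool.eq_false_or_eq_true (cw i' j) with h2 | h2 <;>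
          simp only [h1, h2] at hj ⊢ <;> first
          | (exact absurd rfl hj.2)
          | (simp only [if_true, if_false, Bool.false_eq_true]
             rw [← h4]; ring_nf)
    have hsub : ∑ j ∈ Finset.univ.filter (fun j => cw i j ≠ cw i' j), (pt i j - pt i' j)^2
        ≤ ∑ j, (pt i j - pt i' j)^2 := by
      apply Finset.sum_le_sum_of_subset_of_nonneg (Finset.filter_subset _ _)
      intro j _ _; positivity
    rw [Finset.sum_congr rfl hterm, Finset.sum_const] at hsub
    have hcard : (hammingDist (cw i) (cw i') : ℝ) * (4/d)
        ≤ ∑ j, (pt i j - pt i' j)^2 := by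
      rw [hammingDist]
      simpa [nsmul_eq_mul] using hsub
    have h12 : (1:ℝ)/2 ≤ (hammingDist (cw i) (cw i') : ℝ) * (4/d) := by
      have h1 : (k:ℝ) ≤ (hammingDist (cw i) (cw i') : ℝ) := by exact_mod_cast hcd
      rw [hdd]
      have hk0 : (0:ℝ) < k := by exact_mod_cast (by omega : 0 < k)
      have hmul : (k:ℝ) * (4/(8*(k:ℝ))) ≤ (hammingDist (cw i) (cw i') : ℝ) * (4/(8*(k:ℝ))) :=
        mul_le_mul_of_nonneg_right h1 (by positivity)
      have he : (k:ℝ) * (4/(8*(k:ℝ))) = 1/2 := by field_simp; ring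
      linarith
    linarith
  have hTe : T * ε^2 = L^2*B^2 := by rw [hTdef]; field_simp
  have hd128 : (d:ℝ)*128*ε^2 ≤ L^2*B^2 := by nlinarith
  -- lower bound on squared distance between differently-labeled image points
  have hsep2 : ∀ (y y' : Fin mpts → Bool) (i i' : Fin mpts), (y = y' → i ≠ i') →
      B^2/(2*(d:ℝ)) ≤ ∑ a, ((Wmat ι r y).mulVec (pt i) a - (Wmat ι r y').mulVec (pt i') a)^2 := by
    intro y y' i i' hcond
    rw [Wmat_dist_sq]
    rcases eq_or_ne y y' with rfl | hyy
    · rw [if_pos rfl]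
      have hfac : ∑ j, (r * pt i j - r * pt i' j)^2 = r^2 * ∑ j, (pt i j - pt i' j)^2 := by
        rw [Finset.mul_sum]
        apply Finset.sum_congr rfl
        intro j _; ring
      rw [hfac, hr2]
      have := hpt_sep i i' (hcond rfl)
      have h0 : (0:ℝ) ≤ B^2/(d:ℝ) := by positivity
      calc B^2/(2*(d:ℝ)) = B^2/(d:ℝ) * (1/2) := by ring
        _ ≤ B^2/(d:ℝ) * ∑ j, (pt i j - pt i' j)^2 := by
            apply mul_le_mul_of_nonneg_left (by linarith) h0
    · rw [if_neg hyy]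
      have hfac1 : ∑ j, (r * pt i j)^2 = r^2 * ∑ j, (pt i j)^2 := by
        rw [Finset.mul_sum]; apply Finset.sum_congr rfl; intro j _; ring
      have hfac2 : ∑ j, (r * pt i' j)^2 = r^2 * ∑ j, (pt i' j)^2 := by
        rw [Finset.mul_sum]; apply Finset.sum_congr rfl; intro j _; ring
      rw [hfac1, hfac2, hpt_sq, hpt_sq, mul_one, hr2]
      have e : B^2/(2*(d:ℝ)) = (B^2/(d:ℝ))/2 := by ring
      have hpos : (0:ℝ) ≤ B^2/(d:ℝ) := by positivity
      linarith
  have hmargin : ∀ (y y' : Fin mpts → Bool) (i i' : Fin mpts), (y = y' → i ≠ i') →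
      2*ε ≤ L * Real.sqrt (∑ a, ((Wmat ι r y).mulVec (pt i) a
        - (Wmat ι r y').mulVec (pt i') a)^2) := by
    intro y y' i i' hcond
    have h2 : 2*ε/L ≤ Real.sqrt (B^2/(2*(d:ℝ))) := by
      rw [Real.le_sqrt (by positivity) (by positivity)]
      rw [div_pow, div_le_div_iff₀ (by positivity) (by positivity)]
      have hde : (0:ℝ) ≤ (d:ℝ)*ε^2 := by positivity
      have e8 : (2*ε)^2*(2*(d:ℝ)) = 8*((d:ℝ)*ε^2) := by ring
      have e9 : (d:ℝ)*128*ε^2 = 128*((d:ℝ)*ε^2) := by ring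
      linarith
    have hS := hsep2 y y' i i' hcond
    have h1 : Real.sqrt (B^2/(2*(d:ℝ)))
        ≤ Real.sqrt (∑ a, ((Wmat ι r y).mulVec (pt i) a
            - (Wmat ι r y').mulVec (pt i') a)^2) := Real.sqrt_le_sqrt hS
    have h3 : L * (2*ε/L) ≤ L * Real.sqrt (∑ a, ((Wmat ι r y).mulVec (pt i) a
        - (Wmat ι r y').mulVec (pt i') a)^2) :=
      mul_le_mul_of_nonneg_left (h2.trans h1) hL0.le
    have h4 : L * (2*ε/L) = 2*ε := by field_simp
    linarith
  -- the labeled point sets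
  set Q : (Fin mpts → Bool) → Fin mpts → EuclideanSpace ℝ (Fin n) :=
    fun y i => (WithLp.equiv 2 (Fin n → ℝ)).symm ((Wmat ι r y).mulVec (pt i)) with hQdef
  set Sp : Set (EuclideanSpace ℝ (Fin n)) := {v | ∃ y i, y i = true ∧ v = Q y i} with hSpdef
  set Sm : Set (EuclideanSpace ℝ (Fin n)) := {v | ∃ y i, y i = false ∧ v = Q y i} with hSmdef
  set g0 : EuclideanSpace ℝ (Fin n) → ℝ := fun v => if v ∈ Sp then ε else -ε with hg0def
  have hdistQ : ∀ y i y' i', dist (Q y i) (Q y' i')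
      = Real.sqrt (∑ a, ((Wmat ι r y).mulVec (pt i) a - (Wmat ι r y').mulVec (pt i') a)^2) := by
    intro y i y' i'
    rw [hQdef]
    simp only
    rw [dist_eq_norm, equiv_symm_sub', euclNorm_eq_norm, euclNorm]
    simp [Pi.sub_apply]
  have key : ∀ p ∈ Sp, ∀ q ∈ Sm, 2*ε ≤ L * dist p q := by
    intro p hp q hq
    obtain ⟨y, i, hyi, rfl⟩ := hp
    obtain ⟨y', i', hyi', rfl⟩ := hq
    rw [hdistQ]
    apply hmargin
    rintro rfl rfl
    rw [hyi] at hyi'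
    exact Bool.noConfusion hyi'
  have hSm_not_Sp : ∀ q ∈ Sm, q ∉ Sp := by
    intro q hq hp
    have h := key q hp q hq
    rw [dist_self, mul_zero] at h
    exact absurd h (not_le.mpr h2ε)
  have hg0p : ∀ p ∈ Sp, g0 p = ε := by
    intro p hp; rw [hg0def]; simp only; rw [if_pos hp]
  have hg0m : ∀ q ∈ Sm, g0 q = -ε := by
    intro q hq; rw [hg0def]; simp only; rw [if_neg (hSm_not_Sp q hq)]
  have habs1 : |ε - -ε| = 2*ε := by
    rw [sub_neg_eq_add, abs_of_pos (by linarith)]; ring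
  have habs2 : |-ε - ε| = 2*ε := by
    rw [abs_sub_comm, habs1]
  have hlip : LipschitzOnWith (Real.toNNReal L) g0 (Sp ∪ Sm) := by
    rw [lipschitzOnWith_iff_dist_le_mul]
    intro p hp q hq
    have hcoe : (Real.toNNReal L : ℝ) = L := Real.coe_toNNReal L (by linarith)
    rw [hcoe]
    rcases hp with hp | hp <;> rcases hq with hq | hq
    · rw [hg0p p hp, hg0p q hq, Real.dist_eq, sub_self, abs_zero]; positivity
    · rw [hg0p p hp, hg0m q hq, Real.dist_eq, habs1]
      exact key p hp q hq
    · rw [hg0m p hp, hg0p q hq, Real.dist_eq, habs2, dist_comm]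
      exact key q hq p hp
    · rw [hg0m p hp, hg0m q hq, Real.dist_eq, sub_self, abs_zero]; positivity
  obtain ⟨fE, hfElip, hfEeq⟩ := hlip.extend_real
  refine ⟨d, n, mpts, fun v => fE ((WithLp.equiv 2 (Fin n → ℝ)).symm v), ?_, hexp, ?_⟩
  · intro u v
    have h1 := hfElip.dist_le_mul ((WithLp.equiv 2 (Fin n → ℝ)).symm u)
      ((WithLp.equiv 2 (Fin n → ℝ)).symm v)
    rw [Real.dist_eq] at h1
    have hcoe : (Real.toNNReal L : ℝ) = L := Real.coe_toNNReal L (by linarith)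
    rw [hcoe] at h1
    rw [dist_eq_norm, equiv_symm_sub', euclNorm_eq_norm] at h1
    exact h1
  refine ⟨pt, hpt_norm, 0, ?_⟩
  intro y
  refine ⟨fun v => fE ((WithLp.equiv 2 (Fin n → ℝ)).symm ((Wmat ι r y).mulVec v)),
    ⟨Wmat ι r y, ?_, rfl⟩, ?_⟩
  · rw [frobNorm, Wmat_frob_sq, hr2]
    rw [mul_comm, div_mul_cancel₀ _ hdR.ne', Real.sqrt_sq hB0.le]
  intro i
  constructor
  · intro hyi
    have hmem : Q y i ∈ Sm := ⟨y, i, hyi, rfl⟩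
    have h := hfEeq (Set.mem_union_right _ hmem)
    show fE (Q y i) ≤ 0 - ε
    rw [← h, hg0m _ hmem]
    linarith
  · intro hyi
    have hmem : Q y i ∈ Sp := ⟨y, i, hyi, rfl⟩
    have h := hfEeq (Set.mem_union_left _ hmem)
    show 0 + ε ≤ fE (Q y i)
    rw [← h, hg0p _ hmem]
    linarith
end
end

section
/- For any m ∈ ℕ and 0 < ε ≤ 0.5, there exist dimensions d = m + 1 and n = 2^m + m, a matrix W_0 ∈ ℝ^{n×d} with spectral norm ‖W_0‖ = 2√2·ε, and a function f: ℝⁿ → ℝ which is 1-Lipschitz with respect to the infinity norm (hence also 1-Lipschitz with respect to the Euclidean norm), such that the class {x ↦ f(Wx) : W ∈ ℝ^{n×d}, ‖W − W_0‖_F ≤ √2} shatters m points from the Euclidean unit ball {x ∈ ℝ^d : ‖x‖ ≤ 1} with margin ε. -/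
noncomputable section

open scoped BigOperators

/-- Spectral norm of a matrix (operator norm with respect to Euclidean norms). -/
def specNorm {n d : ℕ} (M : Matrix (Fin n) (Fin d) ℝ) : ℝ :=
  sSup {r : ℝ | ∃ x : Fin d → ℝ, euclNorm x ≤ 1 ∧ r = euclNorm (M.mulVec x)}

/-- Infinity norm of a vector in `ℝ^n`. -/
def supNorm {n : ℕ} (v : Fin n → ℝ) : ℝ := ⨆ i, |v i|

namespace Statement5Aux

lemma csSup_eq_of_mem_of_ub {A : Set ℝ} {c : ℝ} (h1 : c ∈ A) (h2 : ∀ r ∈ A, r ≤ c) :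
    sSup A = c :=
  le_antisymm (csSup_le ⟨c, h1⟩ h2) (le_csSup ⟨c, h2⟩ h1)

lemma abs_le_supNorm {n : ℕ} (v : Fin n → ℝ) (i : Fin n) : |v i| ≤ supNorm v :=
  le_ciSup (Finite.bddAbove_range fun j : Fin n => |v j|) i

lemma ite_sq {c : Prop} [inst : Decidable c] (a : ℝ) :
    (if c then a else 0) ^ 2 = if c then a ^ 2 else 0 := by
  split <;> simp

lemma supNorm_nonneg {n : ℕ} (hn : 0 < n) (v : Fin n → ℝ) : 0 ≤ supNorm v :=
  (abs_nonneg _).trans (abs_le_supNorm v ⟨0, hn⟩)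

lemma abs_ciSup_sub_ciSup_le {ι : Type*} [Nonempty ι] [Finite ι] (f g : ι → ℝ) {c : ℝ}
    (h : ∀ q, |f q - g q| ≤ c) : |(⨆ q, f q) - ⨆ q, g q| ≤ c := by
  rw [abs_sub_le_iff]
  constructor
  · rw [sub_le_iff_le_add]
    refine ciSup_le fun q => ?_
    have h1 := (abs_sub_le_iff.1 (h q)).1
    have h2 : g q ≤ ⨆ q, g q := le_ciSup (Finite.bddAbove_range _) q
    linarith
  · rw [sub_le_iff_le_add]
    refine ciSup_le fun q => ?_
    have h1 := (abs_sub_le_iff.1 (h q)).2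
    have h2 : f q ≤ ⨆ q, f q := le_ciSup (Finite.bddAbove_range _) q
    linarith

variable (m : ℕ) (ε : ℝ)

/-- An enumeration of the sign patterns. -/
def enc : (Fin m → Bool) ≃ Fin (2 ^ m) := Fintype.equivFinOfCardEq (by simp)

/-- Row associated to the pattern `y`. -/
def R (y : Fin m → Bool) : Fin (2 ^ m + m) := Fin.castAdd m (enc m y)

/-- Row associated to the point index `i`. -/
def P (i : Fin m) : Fin (2 ^ m + m) := Fin.natAdd (2 ^ m) i

/-- The initialization matrix. -/
def W0 : Matrix (Fin (2 ^ m + m)) (Fin (m + 1)) ℝ := fun r j =>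
  Fin.addCases (motive := fun _ => ℝ) (fun _ => 0)
    (fun i => if j = Fin.castSucc i then 2 * Real.sqrt 2 * ε else 0) r

/-- The perturbed matrix for pattern `y`. -/
def Wy (y : Fin m → Bool) : Matrix (Fin (2 ^ m + m)) (Fin (m + 1)) ℝ := fun r j =>
  W0 m ε r j + if r = R m y ∧ j = Fin.last m then Real.sqrt 2 else 0

/-- The shattered points. -/
def xv (i : Fin m) : Fin (m + 1) → ℝ :=
  Fin.lastCases (Real.sqrt 2 * ε)
    (fun j => if j = i then Real.sqrt (1 - 2 * ε ^ 2) else 0)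

/-- The Lipschitz readout function. -/
def ff (u : Fin (2 ^ m + m) → ℝ) : ℝ :=
  ⨆ q : (Fin m → Bool) × Fin m,
    if q.1 q.2 then max (min (u (R m q.1)) (u (P m q.2))) 0 else 0

lemma W0_left (p : Fin (2 ^ m)) (j : Fin (m + 1)) : W0 m ε (Fin.castAdd m p) j = 0 := by
  simp [W0]

lemma W0_right (i : Fin m) (j : Fin (m + 1)) :
    W0 m ε (Fin.natAdd (2 ^ m) i) j = if j = Fin.castSucc i then 2 * Real.sqrt 2 * ε else 0 := by
  simp [W0]

lemma R_ne_P (y : Fin m → Bool) (i : Fin m) : P m i ≠ R m y := by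
  have h1 : (P m i : ℕ) = 2 ^ m + i := rfl
  have h2 : (R m y : ℕ) = (enc m y : ℕ) := rfl
  have h3 : (enc m y : ℕ) < 2 ^ m := (enc m y).isLt
  intro h
  rw [Fin.ext_iff, h1, h2] at h
  omega

lemma W0_mulVec_left (v : Fin (m + 1) → ℝ) (p : Fin (2 ^ m)) :
    (W0 m ε).mulVec v (Fin.castAdd m p) = 0 := by
  simp [Matrix.mulVec, dotProduct, W0_left]

lemma W0_mulVec_right (v : Fin (m + 1) → ℝ) (i : Fin m) :
    (W0 m ε).mulVec v (Fin.natAdd (2 ^ m) i) = 2 * Real.sqrt 2 * ε * v (Fin.castSucc i) := by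
  simp only [Matrix.mulVec, dotProduct, W0_right, ite_mul, zero_mul]
  rw [Finset.sum_ite_eq']
  simp

lemma xv_last (i : Fin m) : xv m ε i (Fin.last m) = Real.sqrt 2 * ε := by
  simp [xv]

lemma xv_castSucc (i j : Fin m) :
    xv m ε i (Fin.castSucc j) = if j = i then Real.sqrt (1 - 2 * ε ^ 2) else 0 := by
  simp [xv]

lemma Wy_mulVec_R (y y' : Fin m → Bool) (i : Fin m) :
    (Wy m ε y).mulVec (xv m ε i) (R m y') = if y' = y then 2 * ε else 0 := by
  have hRR : (R m y' = R m y) ↔ y' = y := by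
    unfold R
    rw [(Fin.castAdd_injective _ _).eq_iff, (enc m).injective.eq_iff]
  have hsum : (Wy m ε y).mulVec (xv m ε i) (R m y')
      = ∑ j, (W0 m ε (R m y') j
        + if R m y' = R m y ∧ j = Fin.last m then Real.sqrt 2 else 0) * xv m ε i j := rfl
  have hW0R : ∀ j, W0 m ε (R m y') j = 0 := fun j => W0_left m ε (enc m y') j
  rw [hsum]
  by_cases hyy : y' = y
  · subst hyy
    simp only [hW0R, zero_add, eq_self_iff_true, true_and, if_true, ite_mul, zero_mul]
    rw [Finset.sum_ite_eq']
    simp only [Finset.mem_univ, if_true, xv_last]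
    rw [← mul_assoc, Real.mul_self_sqrt (by norm_num : (0:ℝ) ≤ 2)]
  · simp only [hW0R, zero_add, hRR, hyy, false_and, if_false, zero_mul,
      Finset.sum_const_zero, if_neg hyy]

lemma Wy_mulVec_P (y : Fin m → Bool) (i i' : Fin m) :
    (Wy m ε y).mulVec (xv m ε i) (P m i')
      = if i' = i then 2 * Real.sqrt 2 * ε * Real.sqrt (1 - 2 * ε ^ 2) else 0 := by
  have hsum : (Wy m ε y).mulVec (xv m ε i) (P m i')
      = ∑ j, (W0 m ε (P m i') j
        + if P m i' = R m y ∧ j = Fin.last m then Real.sqrt 2 else 0) * xv m ε i j := rfl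
  rw [hsum]
  simp only [R_ne_P, false_and, if_false, add_zero]
  have h2 : ∀ j, W0 m ε (P m i') j
      = if j = Fin.castSucc i' then 2 * Real.sqrt 2 * ε else 0 :=
    fun j => W0_right m ε i' j
  simp only [h2, ite_mul, zero_mul]
  rw [Finset.sum_ite_eq']
  simp only [Finset.mem_univ, if_true, xv_castSucc]
  by_cases h : i' = i <;> simp [h]

lemma frob_Wy (y : Fin m → Bool) : frobNorm (Wy m ε y - W0 m ε) ≤ Real.sqrt 2 := by
  have hentry : ∀ r j, (Wy m ε y - W0 m ε) r j
      = if r = R m y ∧ j = Fin.last m then Real.sqrt 2 else 0 := by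
    intro r j
    simp [Wy, Matrix.sub_apply]
  have hrow : ∀ r, (∑ j, ((Wy m ε y - W0 m ε) r j) ^ 2) = if r = R m y then 2 else 0 := by
    intro r
    by_cases hr : r = R m y
    · simp only [hentry, hr, eq_self_iff_true, true_and, if_true, ite_sq]
      rw [Finset.sum_ite_eq']
      simp [Real.sq_sqrt (by norm_num : (0:ℝ) ≤ 2)]
    · simp [hentry, hr]
  rw [frobNorm]
  simp only [hrow]
  rw [Finset.sum_ite_eq']
  simp

lemma specNorm_W0 (hm : 0 < m) (hε : 0 ≤ ε) :
    specNorm (W0 m ε) = 2 * Real.sqrt 2 * ε := by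
  have hc : 0 ≤ 2 * Real.sqrt 2 * ε := by positivity
  apply csSup_eq_of_mem_of_ub
  · refine ⟨fun j => if j = Fin.castSucc ⟨0, hm⟩ then 1 else 0, ?_, ?_⟩
    · rw [euclNorm]
      simp only [ite_sq, one_pow]
      rw [Finset.sum_ite_eq']
      simp
    · rw [euclNorm]
      rw [Fin.sum_univ_add]
      simp only [W0_mulVec_left, W0_mulVec_right]
      simp only [ne_eq, zero_pow, Finset.sum_const_zero, zero_add,
        OfNat.ofNat_ne_zero, not_false_iff]
      have : ∀ i : Fin m,
          (2 * Real.sqrt 2 * ε * if Fin.castSucc i = Fin.castSucc ⟨0, hm⟩ then (1:ℝ) else 0) ^ 2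
          = if i = ⟨0, hm⟩ then (2 * Real.sqrt 2 * ε) ^ 2 else 0 := by
        intro i
        simp only [Fin.castSucc_inj]
        split
        · rw [mul_one]
        · rw [mul_zero]; norm_num
      simp only [this]
      rw [Finset.sum_ite_eq']
      simp only [Finset.mem_univ, if_true]
      rw [Real.sqrt_sq hc]
  · rintro r ⟨x, hx, rfl⟩
    rw [euclNorm, Fin.sum_univ_add]
    simp only [W0_mulVec_left, W0_mulVec_right, ne_eq, zero_pow, Finset.sum_const_zero,
      zero_add, OfNat.ofNat_ne_zero, not_false_iff]
    have h1 : ∑ i : Fin m, (2 * Real.sqrt 2 * ε * x (Fin.castSucc i)) ^ 2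
        = (2 * Real.sqrt 2 * ε) ^ 2 * ∑ i : Fin m, (x (Fin.castSucc i)) ^ 2 := by
      rw [Finset.mul_sum]
      congr 1
      funext i
      ring
    rw [h1]
    have h2 : ∑ i : Fin m, (x (Fin.castSucc i)) ^ 2 ≤ ∑ j, (x j) ^ 2 := by
      rw [Fin.sum_univ_castSucc]
      nlinarith [sq_nonneg (x (Fin.last m))]
    calc Real.sqrt ((2 * Real.sqrt 2 * ε) ^ 2 * ∑ i : Fin m, (x (Fin.castSucc i)) ^ 2)
        ≤ Real.sqrt ((2 * Real.sqrt 2 * ε) ^ 2 * ∑ j, (x j) ^ 2) := by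
          apply Real.sqrt_le_sqrt
          apply mul_le_mul_of_nonneg_left h2 (by positivity)
      _ = (2 * Real.sqrt 2 * ε) * Real.sqrt (∑ j, (x j) ^ 2) := by
          rw [Real.sqrt_mul (by positivity), Real.sqrt_sq hc]
      _ ≤ (2 * Real.sqrt 2 * ε) * 1 := by
          apply mul_le_mul_of_nonneg_left _ hc
          exact hx
      _ = 2 * Real.sqrt 2 * ε := mul_one _

lemma ff_lip (hm : 0 < m) (u v : Fin (2 ^ m + m) → ℝ) :
    |ff m u - ff m v| ≤ supNorm (u - v) := by
  have : Nonempty (Fin m) := ⟨⟨0, hm⟩⟩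
  have hn : 0 < 2 ^ m + m := by positivity
  apply abs_ciSup_sub_ciSup_le
  intro q
  by_cases hq : q.1 q.2 = true
  · simp only [hq, if_true]
    refine le_trans (abs_max_sub_max_le_max _ _ _ _) ?_
    apply max_le
    · refine le_trans (abs_min_sub_min_le_max _ _ _ _) ?_
      apply max_le
      · have := abs_le_supNorm (u - v) (R m q.1)
        simpa [Pi.sub_apply] using this
      · have := abs_le_supNorm (u - v) (P m q.2)
        simpa [Pi.sub_apply] using this
    · simpa using supNorm_nonneg hn (u - v)
  · simp only [hq, if_false]
    simpa using supNorm_nonneg hn (u - v)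

lemma key_ineq (hε : 0 < ε) (hε' : ε ≤ 1 / 2) :
    2 * ε ≤ 2 * Real.sqrt 2 * ε * Real.sqrt (1 - 2 * ε ^ 2) := by
  have h0 : (0:ℝ) ≤ 1 - 2 * ε ^ 2 := by nlinarith
  have h1 : Real.sqrt 2 * Real.sqrt (1 - 2 * ε ^ 2) = Real.sqrt (2 * (1 - 2 * ε ^ 2)) :=
    (Real.sqrt_mul (by norm_num) _).symm
  have h2 : (1:ℝ) ≤ Real.sqrt (2 * (1 - 2 * ε ^ 2)) := by
    have := Real.sqrt_le_sqrt (show (1:ℝ) ≤ 2 * (1 - 2 * ε ^ 2) by nlinarith)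
    rwa [Real.sqrt_one] at this
  calc 2 * ε = 2 * ε * 1 := (mul_one _).symm
    _ ≤ 2 * ε * (Real.sqrt 2 * Real.sqrt (1 - 2 * ε ^ 2)) := by
        rw [h1]
        apply mul_le_mul_of_nonneg_left h2 (by positivity)
    _ = 2 * Real.sqrt 2 * ε * Real.sqrt (1 - 2 * ε ^ 2) := by ring

lemma euclNorm_xv (hε : 0 < ε) (hε' : ε ≤ 1 / 2) (i : Fin m) : euclNorm (xv m ε i) ≤ 1 := by
  have h0 : (0:ℝ) ≤ 1 - 2 * ε ^ 2 := by nlinarith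
  have hsumterm : ∀ x : Fin m, (xv m ε i (Fin.castSucc x)) ^ 2
      = if x = i then 1 - 2 * ε ^ 2 else 0 := by
    intro x
    rw [xv_castSucc]
    split
    · exact Real.sq_sqrt h0
    · norm_num
  rw [euclNorm, Fin.sum_univ_castSucc]
  simp only [hsumterm, xv_last]
  rw [Finset.sum_ite_eq']
  simp only [Finset.mem_univ, if_true]
  rw [mul_pow, Real.sq_sqrt (by norm_num : (0:ℝ) ≤ 2)]
  have : 1 - 2 * ε ^ 2 + 2 * ε ^ 2 = 1 := by ring
  rw [this, Real.sqrt_one]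

end Statement5Aux

open Statement5Aux in
/-- Theorem 4 (lower bound with nonzero initialization) -/
theorem statement5 (m : ℕ) (ε : ℝ) (hε : 0 < ε) (hε' : ε ≤ 0.5) :
    ∃ (W₀ : Matrix (Fin (2 ^ m + m)) (Fin (m + 1)) ℝ)
      (f : (Fin (2 ^ m + m) → ℝ) → ℝ),
      specNorm W₀ = 2 * Real.sqrt 2 * ε ∧
      (∀ u v : Fin (2 ^ m + m) → ℝ, |f u - f v| ≤ supNorm (u - v)) ∧
      ∃ x : Fin m → (Fin (m + 1) → ℝ),
        (∀ i, euclNorm (x i) ≤ 1) ∧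
        shatters {g : (Fin (m + 1) → ℝ) → ℝ |
            ∃ W : Matrix (Fin (2 ^ m + m)) (Fin (m + 1)) ℝ,
              frobNorm (W - W₀) ≤ Real.sqrt 2 ∧
              g = fun v => f (W.mulVec v)} x ε := by
  have hε2 : ε ≤ 1 / 2 := by norm_num at hε' ⊢; linarith
  rcases Nat.eq_zero_or_pos m with hm | hm
  · subst hm
    refine ⟨(fun _ _ => 2 * Real.sqrt 2 * ε : Matrix (Fin 1) (Fin 1) ℝ),
      fun _ => 0, ?_, ?_, fun i => i.elim0, fun i => i.elim0, 0, fun y => ?_⟩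
    · have hc : 0 ≤ 2 * Real.sqrt 2 * ε := by positivity
      apply csSup_eq_of_mem_of_ub
      · refine ⟨fun _ => 1, ?_, ?_⟩
        · show Real.sqrt (∑ i : Fin 1, (1:ℝ) ^ 2) ≤ 1
          simp
        · show 2 * Real.sqrt 2 * ε
            = Real.sqrt (∑ i : Fin 1, (∑ j : Fin 1, 2 * Real.sqrt 2 * ε * 1) ^ 2)
          simp [Real.sqrt_sq hc]
      · rintro r ⟨x, hx, rfl⟩
        have hx0 : |x 0| ≤ 1 := by
          have : euclNorm x = |x 0| := by
            show Real.sqrt (∑ i : Fin 1, (x i) ^ 2) = |x 0|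
            simp [Real.sqrt_sq_eq_abs]
          rw [this] at hx
          exact hx
        show Real.sqrt (∑ i : Fin 1, (∑ j : Fin 1, 2 * Real.sqrt 2 * ε * x j) ^ 2)
          ≤ 2 * Real.sqrt 2 * ε
        simp only [Fin.sum_univ_one]
        rw [Real.sqrt_sq_eq_abs, abs_mul]
        calc |2 * Real.sqrt 2 * ε| * |x 0| ≤ |2 * Real.sqrt 2 * ε| * 1 :=
              mul_le_mul_of_nonneg_left hx0 (abs_nonneg _)
          _ = 2 * Real.sqrt 2 * ε := by rw [mul_one, abs_of_nonneg hc]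
    · intro u v
      simp only [sub_zero, abs_zero]
      exact supNorm_nonneg (by norm_num) (u - v)
    · refine ⟨_, ⟨(fun _ _ => 2 * Real.sqrt 2 * ε : Matrix (Fin 1) (Fin 1) ℝ), ?_, rfl⟩,
        fun i => i.elim0⟩
      have hW : ((fun _ _ => 2 * Real.sqrt 2 * ε : Matrix (Fin 1) (Fin 1) ℝ)
          - fun _ _ => 2 * Real.sqrt 2 * ε) = 0 := by
        ext r j
        simp
      erw [hW]
      have : frobNorm (0 : Matrix (Fin 1) (Fin 1) ℝ) = 0 := by
        simp [frobNorm]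
      erw [this]
      exact Real.sqrt_nonneg 2
  · have hnm : Nonempty (Fin m) := ⟨⟨0, hm⟩⟩
    refine ⟨W0 m ε, ff m, specNorm_W0 m ε hm hε.le, ff_lip m hm, xv m ε,
      euclNorm_xv m ε hε hε2, ε, fun y => ?_⟩
    refine ⟨fun v => ff m ((Wy m ε y).mulVec v),
      ⟨Wy m ε y, frob_Wy m ε y, rfl⟩, fun i => ⟨?_, ?_⟩⟩
    · intro hyi
      have hzero : ∀ q : (Fin m → Bool) × Fin m,
          (if q.1 q.2 then
            max (min ((Wy m ε y).mulVec (xv m ε i) (R m q.1))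
              ((Wy m ε y).mulVec (xv m ε i) (P m q.2))) 0 else 0) = 0 := by
        rintro ⟨y', i'⟩
        by_cases hq : y' i' = true
        · simp only [hq, if_true]
          by_cases hy' : y' = y
          · have hii : i' ≠ i := by
              intro h
              rw [hy', h, hyi] at hq
              exact Bool.false_ne_true hq
            rw [Wy_mulVec_P, if_neg hii]
            exact max_eq_right (min_le_right _ _)
          · rw [Wy_mulVec_R, if_neg hy']
            exact max_eq_right (min_le_left _ _)
        · simp [hq]
      have : ff m ((Wy m ε y).mulVec (xv m ε i)) = 0 := by
        rw [ff]
        simp only [hzero]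
        exact ciSup_const
      show ff m ((Wy m ε y).mulVec (xv m ε i)) ≤ ε - ε
      rw [this]
      simp
    · intro hyi
      have hterm : (if y i then
          max (min ((Wy m ε y).mulVec (xv m ε i) (R m y))
            ((Wy m ε y).mulVec (xv m ε i) (P m i))) 0 else 0) = 2 * ε := by
        rw [if_pos hyi, Wy_mulVec_R, if_pos rfl, Wy_mulVec_P, if_pos rfl]
        rw [min_eq_left (key_ineq ε hε hε2)]
        exact max_eq_left (by positivity)
      have hle : (2:ℝ) * ε ≤ ff m ((Wy m ε y).mulVec (xv m ε i)) := by
        rw [← hterm]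
        show (fun q : (Fin m → Bool) × Fin m =>
            if q.1 q.2 then
              max (min ((Wy m ε y).mulVec (xv m ε i) (R m q.1))
                ((Wy m ε y).mulVec (xv m ε i) (P m q.2))) 0 else 0) ⟨y, i⟩
          ≤ ff m ((Wy m ε y).mulVec (xv m ε i))
        exact le_ciSup (f := fun q : (Fin m → Bool) × Fin m =>
          if q.1 q.2 then
            max (min ((Wy m ε y).mulVec (xv m ε i) (R m q.1))
              ((Wy m ε y).mulVec (xv m ε i) (P m q.2))) 0 else 0)
          (Finite.bddAbove_range _) ⟨y, i⟩
      show ε + ε ≤ ff m ((Wy m ε y).mulVec (xv m ε i))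
      linarith
end
end

section
/- Let σ: ℝ → ℝ be L-Lipschitz and μ-smooth (σ' is μ-Lipschitz), and let b_x > 0. Then the function ψ(x, y, v) = (σ(vx + y) − σ(y))/v, defined on the domain I = [−b_x, b_x] × ℝ × (0, ∞), satisfies the partial derivative bounds |∂ψ/∂x| ≤ L, |∂ψ/∂y| ≤ μ b_x and |∂ψ/∂v| ≤ (μ/2) b_x², and is consequently Lipschitz on I (with respect to the Euclidean norm on ℝ³) with Lipschitz constant at most L + μ b_x + (μ/2) b_x². -/
noncomputable section

open Set

/-- Taylor bound at the base point, for `a ≤ b`. -/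
lemma taylor_aux_le (f f' : ℝ → ℝ) (μ : ℝ) (hf : ∀ x, HasDerivAt f (f' x) x)
    (hlip : ∀ s t : ℝ, |f' s - f' t| ≤ μ * |s - t|) (a b : ℝ) (hab : a ≤ b) :
    |f b - f a - f' a * (b - a)| ≤ μ / 2 * (b - a) ^ 2 := by
  set c := f' a with hc
  set g : ℝ → ℝ := fun t => f t - f a - c * (t - a) with hg
  have hgd : ∀ t, HasDerivAt g (f' t - c) t := by
    intro t
    have h1 : HasDerivAt (fun t : ℝ => c * (t - a)) c t := by
      simpa using (((hasDerivAt_id t).sub_const a).const_mul c)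
    exact (((hf t).sub_const (f a)).sub h1)
  have hBd : ∀ t : ℝ, HasDerivAt (fun t => μ / 2 * (t - a) ^ 2) (μ * (t - a)) t := by
    intro t
    have h1 : HasDerivAt (fun t : ℝ => (t - a) ^ 2) (2 * (t - a)) t := by
      exact (((hasDerivAt_id t).sub_const a).pow 2).congr_deriv (by simp)
    have := h1.const_mul (μ / 2)
    exact this.congr_deriv (by ring)
  have key := image_norm_le_of_norm_deriv_right_le_deriv_boundary
    (f := g) (f' := fun t => f' t - c) (a := a) (b := b)
    (fun t _ => (hgd t).continuousAt.continuousWithinAt)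
    (fun t _ => (hgd t).hasDerivWithinAt)
    (B := fun t => μ / 2 * (t - a) ^ 2) (B' := fun t => μ * (t - a))
    (by simp [hg]) hBd
    (fun t ht => by
      have h := hlip t a
      rw [abs_of_nonneg (sub_nonneg.2 ht.1)] at h
      simpa [Real.norm_eq_abs] using h)
    (right_mem_Icc.2 hab)
  simpa [hg, Real.norm_eq_abs] using key

/-- Taylor bound at the base point, general. -/
lemma taylor_aux (f f' : ℝ → ℝ) (μ : ℝ) (hf : ∀ x, HasDerivAt f (f' x) x)
    (hlip : ∀ s t : ℝ, |f' s - f' t| ≤ μ * |s - t|) (a b : ℝ) :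
    |f b - f a - f' a * (b - a)| ≤ μ / 2 * (b - a) ^ 2 := by
  rcases le_total a b with hab | hab
  · exact taylor_aux_le f f' μ hf hlip a b hab
  · -- use g t = f (-t)
    have hg : ∀ x, HasDerivAt (fun t => f (-t)) (f' (-x) * (-1)) x := by
      intro x
      exact (hf (-x)).comp x (hasDerivAt_neg x)
    have hglip : ∀ s t : ℝ, |f' (-s) * (-1) - f' (-t) * (-1)| ≤ μ * |s - t| := by
      intro s t
      have h := hlip (-s) (-t)
      rw [show (-s : ℝ) - (-t) = -(s - t) by ring, abs_neg] at h
      calc |f' (-s) * (-1) - f' (-t) * (-1)| = |f' (-s) - f' (-t)| := by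
            rw [show f' (-s) * (-1) - f' (-t) * (-1) = -(f' (-s) - f' (-t)) by ring, abs_neg]
        _ ≤ μ * |s - t| := h
    have key := taylor_aux_le (fun t => f (-t)) (fun t => f' (-t) * (-1)) μ hg hglip
      (-a) (-b) (by linarith)
    have e1 : |f b - f a - f' a * (b - a)| =
        |f (- -b) - f (- -a) - f' (- -a) * (-1) * (-b - -a)| := by
      rw [neg_neg, neg_neg]; ring_nf
    rw [e1]
    calc |f (- -b) - f (- -a) - f' (- -a) * (-1) * (-b - -a)| ≤ μ / 2 * (-b - -a) ^ 2 := key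
      _ = μ / 2 * (b - a) ^ 2 := by ring
/-- Lemma: if `σ : ℝ → ℝ` is `L`-Lipschitz and `μ`-smooth, then the function
`ψ(x, y, v) = (σ(vx + y) − σ(y))/v` on `[−b_x, b_x] × ℝ × (0, ∞)` has partial
derivatives bounded by `L`, `μ b_x` and `(μ/2) b_x²` respectively, and is Lipschitz
on this domain (with respect to the Euclidean norm on `ℝ³`) with constant at most
`L + μ b_x + (μ/2) b_x²`. -/
theorem statement12 (σ : ℝ → ℝ) (L μ bx : ℝ) (hbx : 0 < bx)
    (hσL : ∀ s t : ℝ, |σ s - σ t| ≤ L * |s - t|)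
    (hσC1 : ContDiff ℝ 1 σ)
    (hσμ : ∀ s t : ℝ, |deriv σ s - deriv σ t| ≤ μ * |s - t|) :
    (∀ x y v : ℝ, |x| ≤ bx → 0 < v →
      |deriv (fun t => (σ (v * t + y) - σ y) / v) x| ≤ L) ∧
    (∀ x y v : ℝ, |x| ≤ bx → 0 < v →
      |deriv (fun t => (σ (v * x + t) - σ t) / v) y| ≤ μ * bx) ∧
    (∀ x y v : ℝ, |x| ≤ bx → 0 < v →
      |deriv (fun t => (σ (t * x + y) - σ y) / t) v| ≤ μ / 2 * bx ^ 2) ∧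
    (∀ x y v x' y' v' : ℝ, |x| ≤ bx → |x'| ≤ bx → 0 < v → 0 < v' →
      |(σ (v * x + y) - σ y) / v - (σ (v' * x' + y') - σ y') / v'|
        ≤ (L + μ * bx + μ / 2 * bx ^ 2) *
            Real.sqrt ((x - x') ^ 2 + (y - y') ^ 2 + (v - v') ^ 2)) := by
  have hσd : ∀ s : ℝ, HasDerivAt σ (deriv σ s) s := fun s =>
    ((hσC1.differentiable one_ne_zero) s).hasDerivAt
  have hL0 : 0 ≤ L := le_trans (abs_nonneg _) (by simpa using hσL 1 0)
  have hμ0 : 0 ≤ μ := le_trans (abs_nonneg _) (by simpa using hσμ 1 0)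
  have hσ'le : ∀ s : ℝ, |deriv σ s| ≤ L := by
    intro s
    have := (hσd s).le_of_lip' hL0 (Filter.Eventually.of_forall fun t => by
      simpa [Real.norm_eq_abs] using hσL t s)
    simpa [Real.norm_eq_abs] using this
  -- derivative computations
  have d1 : ∀ (y v x : ℝ), 0 < v →
      HasDerivAt (fun t => (σ (v * t + y) - σ y) / v) (deriv σ (v * x + y)) x := by
    intro y v x hv
    have h1 : HasDerivAt (fun t : ℝ => v * t + y) v x := by
      simpa using ((hasDerivAt_id x).const_mul v).add_const y
    have h2 : HasDerivAt (fun t => σ (v * t + y)) (deriv σ (v * x + y) * v) x :=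
      (hσd (v * x + y)).comp x h1
    have h3 := (h2.sub_const (σ y)).div_const v
    have : deriv σ (v * x + y) * v / v = deriv σ (v * x + y) := by
      field_simp
    rwa [this] at h3
  have d2 : ∀ (x v y : ℝ), 0 < v →
      HasDerivAt (fun t => (σ (v * x + t) - σ t) / v)
        ((deriv σ (v * x + y) - deriv σ y) / v) y := by
    intro x v y hv
    have h1 : HasDerivAt (fun t : ℝ => v * x + t) 1 y := by
      simpa using (hasDerivAt_id y).const_add (v * x)
    have h2 : HasDerivAt (fun t => σ (v * x + t)) (deriv σ (v * x + y) * 1) y :=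
      (hσd (v * x + y)).comp y h1
    have h3 := (h2.sub (hσd y)).div_const v
    simpa using h3
  have b2 : ∀ (x v y : ℝ), |x| ≤ bx → 0 < v →
      |(deriv σ (v * x + y) - deriv σ y) / v| ≤ μ * bx := by
    intro x v y hx hv
    rw [abs_div, abs_of_pos hv, div_le_iff₀ hv]
    calc |deriv σ (v * x + y) - deriv σ y| ≤ μ * |v * x + y - y| := hσμ _ _
      _ = μ * (v * |x|) := by rw [show v * x + y - y = v * x by ring, abs_mul, abs_of_pos hv]
      _ ≤ μ * (v * bx) := by
          apply mul_le_mul_of_nonneg_left _ hμ0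
          exact mul_le_mul_of_nonneg_left hx hv.le
      _ = μ * bx * v := by ring
  have d3 : ∀ (x y v : ℝ), 0 < v →
      HasDerivAt (fun t => (σ (t * x + y) - σ y) / t)
        ((deriv σ (v * x + y) * x * v - (σ (v * x + y) - σ y) * 1) / v ^ 2) v := by
    intro x y v hv
    have h1 : HasDerivAt (fun t : ℝ => t * x + y) x v := by
      simpa using (hasDerivAt_mul_const x).add_const y
    have h2 : HasDerivAt (fun t => σ (t * x + y)) (deriv σ (v * x + y) * x) v :=
      (hσd (v * x + y)).comp v h1
    exact (h2.sub_const (σ y)).div (hasDerivAt_id v) hv.ne'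
  have b3 : ∀ (x y v : ℝ), |x| ≤ bx → 0 < v →
      |(deriv σ (v * x + y) * x * v - (σ (v * x + y) - σ y) * 1) / v ^ 2|
        ≤ μ / 2 * bx ^ 2 := by
    intro x y v hx hv
    have hv2 : (0:ℝ) < v ^ 2 := by positivity
    rw [abs_div, abs_of_pos hv2, div_le_iff₀ hv2]
    have key := taylor_aux σ (deriv σ) μ hσd hσμ (v * x + y) y
    have e1 : σ y - σ (v * x + y) - deriv σ (v * x + y) * (y - (v * x + y))
        = deriv σ (v * x + y) * x * v - (σ (v * x + y) - σ y) * 1 := by ring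
    rw [e1] at key
    have e2 : (y - (v * x + y)) ^ 2 = v ^ 2 * x ^ 2 := by ring
    rw [e2] at key
    calc |deriv σ (v * x + y) * x * v - (σ (v * x + y) - σ y) * 1|
        ≤ μ / 2 * (v ^ 2 * x ^ 2) := key
      _ ≤ μ / 2 * (v ^ 2 * bx ^ 2) := by
          have hx2 : x ^ 2 ≤ bx ^ 2 := by
            have := sq_abs x
            nlinarith [abs_nonneg x]
          apply mul_le_mul_of_nonneg_left _ (by linarith)
          exact mul_le_mul_of_nonneg_left hx2 hv2.le
      _ = μ / 2 * bx ^ 2 * v ^ 2 := by ring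
  refine ⟨?_, ?_, ?_, ?_⟩
  · intro x y v hx hv
    rw [(d1 y v x hv).deriv]
    exact hσ'le _
  · intro x y v hx hv
    rw [(d2 x v y hv).deriv]
    exact b2 x v y hx hv
  · intro x y v hx hv
    rw [(d3 x y v hv).deriv]
    exact b3 x y v hx hv
  · intro x y v x' y' v' hx hx' hv hv'
    set D := Real.sqrt ((x - x') ^ 2 + (y - y') ^ 2 + (v - v') ^ 2) with hD
    have hDx : |x - x'| ≤ D := by
      rw [hD, ← Real.sqrt_sq_eq_abs]
      exact Real.sqrt_le_sqrt (by nlinarith [sq_nonneg (y - y'), sq_nonneg (v - v')])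
    have hDy : |y - y'| ≤ D := by
      rw [hD, ← Real.sqrt_sq_eq_abs]
      exact Real.sqrt_le_sqrt (by nlinarith [sq_nonneg (x - x'), sq_nonneg (v - v')])
    have hDv : |v - v'| ≤ D := by
      rw [hD, ← Real.sqrt_sq_eq_abs]
      exact Real.sqrt_le_sqrt (by nlinarith [sq_nonneg (x - x'), sq_nonneg (y - y')])
    -- step A : change x
    have stepA : |(σ (v * x + y) - σ y) / v - (σ (v * x' + y) - σ y) / v|
        ≤ L * |x - x'| := by
      rw [div_sub_div_same, abs_div, abs_of_pos hv, div_le_iff₀ hv]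
      calc |σ (v * x + y) - σ y - (σ (v * x' + y) - σ y)|
          = |σ (v * x + y) - σ (v * x' + y)| := by ring_nf
        _ ≤ L * |v * x + y - (v * x' + y)| := hσL _ _
        _ = L * (v * |x - x'|) := by
            rw [show v * x + y - (v * x' + y) = v * (x - x') by ring, abs_mul, abs_of_pos hv]
        _ = L * |x - x'| * v := by ring
    -- step B : change y
    have stepB : |(σ (v * x' + y) - σ y) / v - (σ (v * x' + y') - σ y') / v|
        ≤ μ * bx * |y - y'| := by
      have := Convex.norm_image_sub_le_of_norm_hasDerivWithin_le
        (f := fun t => (σ (v * x' + t) - σ t) / v)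
        (f' := fun t => (deriv σ (v * x' + t) - deriv σ t) / v)
        (s := Set.univ) (C := μ * bx)
        (fun t _ => (d2 x' v t hv).hasDerivWithinAt)
        (fun t _ => by simpa only [Real.norm_eq_abs] using b2 x' v t hx' hv)
        convex_univ (Set.mem_univ y') (Set.mem_univ y)
      simpa [Real.norm_eq_abs] using this
    -- step C : change v
    have stepC : |(σ (v * x' + y') - σ y') / v - (σ (v' * x' + y') - σ y') / v'|
        ≤ μ / 2 * bx ^ 2 * |v - v'| := by
      have := Convex.norm_image_sub_le_of_norm_hasDerivWithin_le
        (f := fun t => (σ (t * x' + y') - σ y') / t)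
        (f' := fun t => (deriv σ (t * x' + y') * x' * t
            - (σ (t * x' + y') - σ y') * 1) / t ^ 2)
        (s := Set.Ioi (0:ℝ)) (C := μ / 2 * bx ^ 2)
        (fun t ht => (d3 x' y' t ht).hasDerivWithinAt)
        (fun t ht => by simpa only [Real.norm_eq_abs] using b3 x' y' t hx' ht)
        (convex_Ioi 0) hv' hv
      simpa only [Real.norm_eq_abs] using this
    have tri : |(σ (v * x + y) - σ y) / v - (σ (v' * x' + y') - σ y') / v'|
        ≤ L * |x - x'| + μ * bx * |y - y'| + μ / 2 * bx ^ 2 * |v - v'| := by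
      calc |(σ (v * x + y) - σ y) / v - (σ (v' * x' + y') - σ y') / v'|
          ≤ |(σ (v * x + y) - σ y) / v - (σ (v * x' + y) - σ y) / v|
            + |(σ (v * x' + y) - σ y) / v - (σ (v * x' + y') - σ y') / v|
            + |(σ (v * x' + y') - σ y') / v - (σ (v' * x' + y') - σ y') / v'| := by
              apply (abs_sub_le _ _ _).trans
              gcongr
              exact abs_sub_le _ _ _
        _ ≤ L * |x - x'| + μ * bx * |y - y'| + μ / 2 * bx ^ 2 * |v - v'| := by
              exact add_le_add (add_le_add stepA stepB) stepC
    have hsum : L * |x - x'| + μ * bx * |y - y'| + μ / 2 * bx ^ 2 * |v - v'|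
        ≤ (L + μ * bx + μ / 2 * bx ^ 2) * D := by
      have h1 : L * |x - x'| ≤ L * D := mul_le_mul_of_nonneg_left hDx hL0
      have h2 : μ * bx * |y - y'| ≤ μ * bx * D :=
        mul_le_mul_of_nonneg_left hDy (by positivity)
      have h3 : μ / 2 * bx ^ 2 * |v - v'| ≤ μ / 2 * bx ^ 2 * D :=
        mul_le_mul_of_nonneg_left hDv (by positivity)
      linarith
    exact tri.trans hsum
end
end
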